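/- Let G be a finite group with a normal subgroup N. Assume that G has a generating set of size d. Let k ≥ d be an integer and let a_1, …, a_k ∈ G be elements such that the cosets a_1 N, …, a_k N generate the quotient group G/N. Then there exist elements b_1, …, b_k of G with b_i ∈ a_i N for each i, such that {b_1, …, b_k} generates G. -/

import Mathlib

open Subgroup QuotientGroup Finset

section Gaschutz

variable {G : Type*} [Group G] [Finite G] (N : Subgroup G) [N.Normal] {k : ℕ}

noncomputable def gphi (q : Fin k → G ⧸ N) (H : Subgroup G) : ℕ :=
  Nat.card {b : Fin k → G // (∀ i, (QuotientGroup.mk (b i) : G ⧸ N) = q i) ∧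
    Subgroup.closure (Set.range b) = H}

lemma gaux_sup {b : Fin k → G} {q : Fin k → G ⧸ N}
    (hbq : ∀ i, (QuotientGroup.mk (b i) : G ⧸ N) = q i)
    (hq : Subgroup.closure (Set.range q) = ⊤) :
    Subgroup.closure (Set.range b) ⊔ N = ⊤ := by
  have hfun : (fun i => (QuotientGroup.mk (b i) : G ⧸ N)) = q := funext hbq
  have hmap : Subgroup.map (QuotientGroup.mk' N) (Subgroup.closure (Set.range b)) = ⊤ := by
    rw [MonoidHom.map_closure, ← Set.range_comp]
    have : (QuotientGroup.mk' N) ∘ b = q := hfun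
    rw [this, hq]
  have := Subgroup.comap_map_eq (QuotientGroup.mk' N) (Subgroup.closure (Set.range b))
  rw [hmap, QuotientGroup.ker_mk'] at this
  rw [← this, Subgroup.comap_top]

-- every element of G/N lifts to H when H ⊔ N = ⊤
lemma gaux_lift {H : Subgroup G} (hH : H ⊔ N = ⊤) (x : G ⧸ N) :
    ∃ h, h ∈ H ∧ (QuotientGroup.mk h : G ⧸ N) = x := by
  have hmap : Subgroup.map (QuotientGroup.mk' N) H = ⊤ := by
    have h1 : Subgroup.map (QuotientGroup.mk' N) (H ⊔ N) = ⊤ := by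
      rw [hH, ← MonoidHom.range_eq_map]
      exact MonoidHom.range_eq_top_of_surjective _ (QuotientGroup.mk'_surjective N)
    rw [Subgroup.map_sup] at h1
    have h2 : Subgroup.map (QuotientGroup.mk' N) N = ⊥ :=
      (Subgroup.map_eq_bot_iff _).2 (by rw [QuotientGroup.ker_mk'])
    rwa [h2, sup_bot_eq] at h1
  have : x ∈ Subgroup.map (QuotientGroup.mk' N) H := hmap ▸ Subgroup.mem_top x
  obtain ⟨h, hh, hhx⟩ := this
  exact ⟨h, hh, hhx⟩

lemma gaux_coset_card {H : Subgroup G} (hH : H ⊔ N = ⊤) (x : G ⧸ N) :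
    Nat.card {y : G // (QuotientGroup.mk y : G ⧸ N) = x ∧ y ∈ H} =
      Nat.card (H ⊓ N : Subgroup G) := by
  obtain ⟨h, hh, hhx⟩ := gaux_lift N hH x
  apply Nat.card_eq_of_bijective (fun y => ⟨h⁻¹ * y.1, by
    obtain ⟨y, hy1, hy2⟩ := y
    refine ⟨H.mul_mem (H.inv_mem hh) hy2, ?_⟩
    have : (QuotientGroup.mk (h⁻¹ * y) : G ⧸ N) = 1 := by
      rw [QuotientGroup.mk_mul, hy1, ← hhx, QuotientGroup.mk_inv, inv_mul_cancel]
    exact (QuotientGroup.eq_one_iff _).1 this⟩)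
  constructor
  · rintro ⟨y, hy⟩ ⟨z, hz⟩ hyz
    simp only [Subtype.mk.injEq, mul_right_inj] at hyz
    exact Subtype.ext hyz
  · rintro ⟨w, hw1, hw2⟩
    refine ⟨⟨h * w, ?_, H.mul_mem hh hw1⟩, ?_⟩
    · rw [QuotientGroup.mk_mul, (QuotientGroup.eq_one_iff w).2 hw2, mul_one, hhx]
    · simp

section Counting

variable [Fintype G] [Fintype (Subgroup G)]

open scoped Classical in
lemma gsum (q : Fin k → G ⧸ N) (H : Subgroup G) (hH : H ⊔ N = ⊤) :
    ∑ K ∈ Finset.univ.filter (· ≤ H), gphi N q K =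
      Nat.card (H ⊓ N : Subgroup G) ^ k := by
  classical
  set s : Finset (Fin k → G) :=
    Finset.univ.filter (fun b => ∀ i, (QuotientGroup.mk (b i) : G ⧸ N) = q i ∧ b i ∈ H) with hs
  have hcard1 : s.card = ∑ K ∈ Finset.univ.filter (· ≤ H), gphi N q K := by
    rw [Finset.card_eq_sum_card_fiberwise (f := fun b => Subgroup.closure (Set.range b))
      (t := Finset.univ.filter (· ≤ H)) ?_]
    · refine Finset.sum_congr rfl fun K hK => ?_
      have hKH : K ≤ H := (Finset.mem_filter.1 hK).2
      have : s.filter (fun b => Subgroup.closure (Set.range b) = K) =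
          Finset.univ.filter (fun b => (∀ i, (QuotientGroup.mk (b i) : G ⧸ N) = q i) ∧
            Subgroup.closure (Set.range b) = K) := by
        ext b
        simp only [hs, Finset.mem_filter, Finset.mem_univ, true_and]
        constructor
        · rintro ⟨hb, hcl⟩
          exact ⟨fun i => (hb i).1, hcl⟩
        · rintro ⟨hb1, hb2⟩
          refine ⟨fun i => ⟨hb1 i, ?_⟩, hb2⟩
          exact hKH (hb2 ▸ Subgroup.subset_closure (Set.mem_range_self i))
      rw [this, gphi, Nat.card_eq_fintype_card, Fintype.card_subtype]
    · intro b hb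
      simp only [hs, Finset.mem_coe, Finset.mem_filter, Finset.mem_univ, true_and] at hb ⊢
      exact (Subgroup.closure_le H).2 (Set.range_subset_iff.2 fun i => (hb i).2)
  have hcard2 : s.card = Nat.card (H ⊓ N : Subgroup G) ^ k := by
    have hpi : s = Fintype.piFinset (fun i : Fin k =>
        Finset.univ.filter (fun y : G => (QuotientGroup.mk y : G ⧸ N) = q i ∧ y ∈ H)) := by
      ext b
      simp [hs, Fintype.mem_piFinset]
    rw [hpi, Fintype.card_piFinset]
    have : ∀ i : Fin k, (Finset.univ.filter
        (fun y : G => (QuotientGroup.mk y : G ⧸ N) = q i ∧ y ∈ H)).card =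
        Nat.card (H ⊓ N : Subgroup G) := by
      intro i
      rw [← gaux_coset_card N hH (q i), Nat.card_eq_fintype_card, Fintype.card_subtype]
    simp [this]
  rw [← hcard1, hcard2]

open scoped Classical in
lemma gphi_eq (q q' : Fin k → G ⧸ N)
    (hq : Subgroup.closure (Set.range q) = ⊤) (hq' : Subgroup.closure (Set.range q') = ⊤)
    (H : Subgroup G) : gphi N q H = gphi N q' H := by
  have key : ∀ n : ℕ, ∀ H : Subgroup G, Nat.card H = n → gphi N q H = gphi N q' H := by
    intro n
    induction n using Nat.strong_induction_on with
    | _ n ih =>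
      intro H hn
      by_cases hHN : H ⊔ N = ⊤
      · have h1 := gsum N q H hHN
        have h2 := gsum N q' H hHN
        have hHmem : H ∈ Finset.univ.filter (· ≤ H) := by simp
        rw [← Finset.add_sum_erase _ _ hHmem] at h1 h2
        have hsum : ∑ K ∈ (Finset.univ.filter (· ≤ H)).erase H, gphi N q K =
            ∑ K ∈ (Finset.univ.filter (· ≤ H)).erase H, gphi N q' K := by
          refine Finset.sum_congr rfl fun K hK => ?_
          have hKne : K ≠ H := (Finset.mem_erase.1 hK).1
          have hKle : K ≤ H := (Finset.mem_filter.1 (Finset.mem_erase.1 hK).2).2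
          have hlt : Nat.card K < n := by
            rw [← hn]
            have hss : (K : Set G) ⊂ (H : Set G) :=
              SetLike.coe_ssubset_coe.2 (lt_of_le_of_ne hKle hKne)
            exact Set.Finite.card_lt_card (Set.toFinite _) hss
          exact ih _ hlt K rfl
        rw [hsum] at h1
        omega
      · have e1 : gphi N q H = 0 := by
          rw [gphi, Nat.card_eq_zero]
          left
          exact ⟨fun ⟨b, hb1, hb2⟩ => hHN (hb2 ▸ gaux_sup N hb1 hq)⟩
        have e2 : gphi N q' H = 0 := by
          rw [gphi, Nat.card_eq_zero]
          left
          exact ⟨fun ⟨b, hb1, hb2⟩ => hHN (hb2 ▸ gaux_sup N hb1 hq')⟩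
        rw [e1, e2]
  exact key _ H rfl

end Counting

end Gaschutz

theorem gaschutz_lemma (G : Type*) [Group G] [Finite G] (N : Subgroup G) [N.Normal]
    (d : ℕ) (g : Fin d → G) (hg : Subgroup.closure (Set.range g) = ⊤)
    (k : ℕ) (hk : d ≤ k) (a : Fin k → G)
    (ha : Subgroup.closure (Set.range fun i => (QuotientGroup.mk (a i) : G ⧸ N)) = ⊤) :
    ∃ b : Fin k → G,
      (∀ i, (QuotientGroup.mk (b i) : G ⧸ N) = QuotientGroup.mk (a i)) ∧
      Subgroup.closure (Set.range b) = ⊤ := by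
  classical
  haveI : Fintype G := Fintype.ofFinite G
  haveI : Fintype (Subgroup G) := Fintype.ofFinite _
  set c : Fin k → G := fun i => if h : (i : ℕ) < d then g ⟨i, h⟩ else 1 with hc
  have hcgen : Subgroup.closure (Set.range c) = ⊤ := by
    rw [eq_top_iff, ← hg]
    apply Subgroup.closure_mono
    rintro x ⟨j, rfl⟩
    refine ⟨⟨j, lt_of_lt_of_le j.2 hk⟩, ?_⟩
    simp [hc, j.2]
  set q : Fin k → G ⧸ N := fun i => QuotientGroup.mk (a i) with hq
  set q' : Fin k → G ⧸ N := fun i => QuotientGroup.mk (c i) with hq'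
  have hq'gen : Subgroup.closure (Set.range q') = ⊤ := by
    have : Set.range q' = (QuotientGroup.mk' N) '' Set.range c := by
      rw [← Set.range_comp]; rfl
    rw [this, ← MonoidHom.map_closure, hcgen, ← MonoidHom.range_eq_map,
      MonoidHom.range_eq_top_of_surjective _ (QuotientGroup.mk'_surjective N)]
  have hpos : gphi N q' ⊤ ≠ 0 := by
    have : Nonempty {b : Fin k → G // (∀ i, (QuotientGroup.mk (b i) : G ⧸ N) = q' i) ∧
        Subgroup.closure (Set.range b) = ⊤} := ⟨⟨c, fun i => rfl, hcgen⟩⟩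
    rw [gphi]
    exact Nat.card_ne_zero.2 ⟨this, inferInstance⟩
  have hpos2 : gphi N q ⊤ ≠ 0 := by rw [gphi_eq N q q' ha hq'gen ⊤]; exact hpos
  have : Nonempty {b : Fin k → G // (∀ i, (QuotientGroup.mk (b i) : G ⧸ N) = q i) ∧
      Subgroup.closure (Set.range b) = ⊤} := by
    by_contra h
    rw [not_nonempty_iff] at h
    exact hpos2 (by rw [gphi, Nat.card_eq_zero]; left; exact h)
  obtain ⟨b, hb1, hb2⟩ := this.some
  exact ⟨b, hb1, hb2⟩
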